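/- Let α > 0 and β ≥ 0 with β < α + 1, and set λ* = 1 + α - β. Define p_k = C/(λ* + b(k) + d(k)) · ∏_{i=0}^{k-1} b(i)/(λ* + b(i) + d(i)) with b(i) = i + α, d(i) = β, for some constant C > 0. Then p_k = C·Γ(2α+1)/Γ(α) · Γ(k+α)/Γ(k+2+2α), and consequently p_k · k^{2+α} converges to a positive constant as k → ∞. -/

import Mathlib

open Filter Real

/-- Product formula: `∏_{i<k} (x+i) = Γ(x+k)/Γ(x)` for `x > 0`. -/
lemma prod_add_eq_Gamma_div (x : ℝ) (hx : 0 < x) (k : ℕ) :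
    ∏ i ∈ Finset.range k, (x + (i : ℝ)) = Real.Gamma (x + k) / Real.Gamma x := by
  induction k with
  | zero => simp [div_self (Real.Gamma_pos_of_pos hx).ne']
  | succ n ih =>
      rw [Finset.prod_range_succ, ih]
      have hxn : (0:ℝ) < x + n := by positivity
      have : Real.Gamma (x + (n + 1 : ℕ)) = (x + n) * Real.Gamma (x + n) := by
        rw [show (x + (n + 1 : ℕ) : ℝ) = (x + n) + 1 by push_cast; ring,
          Real.Gamma_add_one hxn.ne']
      rw [this]
      field_simp

lemma gamma_ratio_tendsto (α : ℝ) (hα : 0 < α) :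
    Tendsto (fun n : ℕ => Real.Gamma ((n:ℝ) + 1 + α) / Real.Gamma ((n:ℝ) + 3 + 2*α)
      * (n:ℝ) ^ (2 + α)) atTop (nhds 1) := by
  have h2α : (0:ℝ) < 2 + 2*α := by linarith
  have hΓα := Real.Gamma_pos_of_pos hα
  have hΓ2α := Real.Gamma_pos_of_pos h2α
  have hlim : Tendsto (fun n : ℕ => Real.Gamma α / Real.Gamma (2 + 2*α) *
      (Real.GammaSeq (2 + 2*α) n / Real.GammaSeq α n)) atTop
      (nhds (Real.Gamma α / Real.Gamma (2 + 2*α) *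
        (Real.Gamma (2 + 2*α) / Real.Gamma α))) := by
    exact Tendsto.const_mul _ ((Real.GammaSeq_tendsto_Gamma (2 + 2*α)).div
      (Real.GammaSeq_tendsto_Gamma α) hΓα.ne')
  have hlim1 : (Real.Gamma α / Real.Gamma (2 + 2*α) *
      (Real.Gamma (2 + 2*α) / Real.Gamma α)) = 1 := by
    field_simp
  rw [hlim1] at hlim
  refine hlim.congr' ?_
  filter_upwards [eventually_ge_atTop 1] with n hn
  have hn0 : (0:ℝ) < (n:ℝ) := by exact_mod_cast hn
  have hfac : (0:ℝ) < (n.factorial : ℝ) := by exact_mod_cast n.factorial_pos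
  have hps : ∀ s : ℝ, 0 < s → Real.GammaSeq s n =
      (n:ℝ) ^ s * n.factorial * Real.Gamma s / Real.Gamma (s + n + 1) := by
    intro s hs
    rw [Real.GammaSeq, show n + 1 = n + 1 from rfl]
    have := prod_add_eq_Gamma_div s hs (n+1)
    rw [this]
    have h1 : Real.Gamma (s + (n+1 : ℕ)) = Real.Gamma (s + n + 1) := by
      push_cast; ring_nf
    rw [h1]
    field_simp
  rw [hps _ h2α, hps _ hα]
  have hΓn1 : (0:ℝ) < Real.Gamma (α + n + 1) := Real.Gamma_pos_of_pos (by positivity)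
  have hΓn2 : (0:ℝ) < Real.Gamma (2 + 2*α + n + 1) := Real.Gamma_pos_of_pos (by positivity)
  have hrp1 : (0:ℝ) < (n:ℝ) ^ (2 + 2*α) := Real.rpow_pos_of_pos hn0 _
  have hrp2 : (0:ℝ) < (n:ℝ) ^ α := Real.rpow_pos_of_pos hn0 _
  have hpow : (n:ℝ) ^ (2 + 2*α) = (n:ℝ) ^ (2 + α) * (n:ℝ) ^ α := by
    rw [← Real.rpow_add hn0]; ring_nf
  have e1 : Real.Gamma ((n:ℝ) + 1 + α) = Real.Gamma (α + n + 1) := by ring_nf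
  have e2 : Real.Gamma ((n:ℝ) + 3 + 2*α) = Real.Gamma (2 + 2*α + n + 1) := by ring_nf
  rw [e1, e2, hpow]
  have hrp3 : (0:ℝ) < (n:ℝ) ^ (2 + α) := Real.rpow_pos_of_pos hn0 _
  field_simp

theorem stmt_6 (α β C : ℝ) (hα : 0 < α) (hβ : 0 ≤ β) (hsup : β < α + 1) (hC : 0 < C)
    (p : ℕ → ℝ)
    (hp : ∀ k : ℕ, p k = C / ((1 + α - β) + ((k : ℝ) + α) + β) *
      ∏ i ∈ Finset.range k, ((i : ℝ) + α) / ((1 + α - β) + ((i : ℝ) + α) + β)) :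
    (∀ k : ℕ, p k = C * Real.Gamma (2 * α + 1) / Real.Gamma α *
      (Real.Gamma ((k : ℝ) + α) / Real.Gamma ((k : ℝ) + 2 + 2 * α))) ∧
    ∃ L > 0, Filter.Tendsto (fun k : ℕ => p k * (k : ℝ) ^ (2 + α))
      Filter.atTop (nhds L) := by
  have hΓα := Real.Gamma_pos_of_pos hα
  have h2α1 : (0:ℝ) < 2*α + 1 := by linarith
  have hΓ2α1 := Real.Gamma_pos_of_pos h2α1
  have hmain : ∀ k : ℕ, p k = C * Real.Gamma (2 * α + 1) / Real.Gamma α *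
      (Real.Gamma ((k : ℝ) + α) / Real.Gamma ((k : ℝ) + 2 + 2 * α)) := by
    intro k
    rw [hp k]
    have hden : ∀ x : ℝ, (1 + α - β) + (x + α) + β = x + 1 + 2*α := by intro x; ring
    have hprod : ∏ i ∈ Finset.range k, ((i : ℝ) + α) / ((1 + α - β) + ((i : ℝ) + α) + β)
        = (∏ i ∈ Finset.range k, (α + (i:ℝ))) / (∏ i ∈ Finset.range k, ((1 + 2*α) + (i:ℝ))) := by
      rw [← Finset.prod_div_distrib]
      refine Finset.prod_congr rfl fun i _ => by rw [hden]; ring_nf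
    rw [hprod, prod_add_eq_Gamma_div α hα, prod_add_eq_Gamma_div (1 + 2*α) (by linarith),
      hden]
    have hΓαk := Real.Gamma_pos_of_pos (show (0:ℝ) < α + k by positivity)
    have h12αk : (0:ℝ) < 1 + 2*α + k := by positivity
    have hΓ12αk := Real.Gamma_pos_of_pos h12αk
    have hΓ12α := Real.Gamma_pos_of_pos (show (0:ℝ) < 1 + 2*α by linarith)
    have e0 : Real.Gamma (2*α + 1) = Real.Gamma (1 + 2*α) := by ring_nf
    have e1 : Real.Gamma ((k:ℝ) + α) = Real.Gamma (α + k) := by ring_nf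
    have e2 : Real.Gamma ((k:ℝ) + 2 + 2*α) = ((k:ℝ) + 1 + 2*α) * Real.Gamma (1 + 2*α + k) := by
      rw [show (k:ℝ) + 2 + 2*α = (1 + 2*α + k) + 1 by ring, Real.Gamma_add_one h12αk.ne']
      ring_nf
    rw [e0, e1, e2]
    have hk12α : (0:ℝ) < (k:ℝ) + 1 + 2*α := by positivity
    field_simp
  refine ⟨hmain, C * Real.Gamma (2 * α + 1) / Real.Gamma α, by positivity, ?_⟩
  set L := C * Real.Gamma (2 * α + 1) / Real.Gamma α with hL
  have key := gamma_ratio_tendsto α hα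
  -- ratio of (n+1)/n to the rpow tends to 1
  have hquot : Tendsto (fun n : ℕ => (((n:ℝ) + 1) / n) ^ (2 + α)) atTop (nhds 1) := by
    have h1 : Tendsto (fun n : ℕ => ((n:ℝ) + 1) / n) atTop (nhds 1) := by
      have : Tendsto (fun n : ℕ => 1 + ((n:ℝ))⁻¹) atTop (nhds (1 + 0)) :=
        tendsto_const_nhds.add (tendsto_inv_atTop_nhds_zero_nat)
      rw [add_zero] at this
      refine this.congr' ?_
      filter_upwards [eventually_ge_atTop 1] with n hn
      have hn0 : ((n:ℝ)) ≠ 0 := by positivity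
      field_simp
    have hc : ContinuousAt (fun x : ℝ => x ^ (2 + α)) 1 :=
      Real.continuousAt_rpow_const 1 (2 + α) (Or.inl one_ne_zero)
    have := hc.tendsto.comp h1
    rw [Real.one_rpow] at this
    exact this
  have hshift : Tendsto (fun n : ℕ => Real.Gamma (((n+1 : ℕ):ℝ) + α) /
      Real.Gamma (((n+1 : ℕ):ℝ) + 2 + 2*α) * ((n+1 : ℕ):ℝ) ^ (2 + α)) atTop (nhds 1) := by
    have := key.mul hquot
    rw [mul_one] at this
    refine this.congr' ?_
    filter_upwards [eventually_ge_atTop 1] with n hn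
    have hn0 : (0:ℝ) < (n:ℝ) := by exact_mod_cast hn
    push_cast
    have e1 : (n:ℝ) + 1 + 2 + 2*α = (n:ℝ) + 3 + 2*α := by ring
    rw [e1]
    rw [Real.div_rpow (by positivity) hn0.le]
    have hrpn : (0:ℝ) < (n:ℝ) ^ (2 + α) := Real.rpow_pos_of_pos hn0 _
    field_simp
  have hfull : Tendsto (fun n : ℕ => Real.Gamma ((n:ℝ) + α) /
      Real.Gamma ((n:ℝ) + 2 + 2*α) * (n:ℝ) ^ (2 + α)) atTop (nhds 1) :=
    (tendsto_add_atTop_iff_nat 1).mp hshift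
  have := hfull.const_mul L
  rw [mul_one] at this
  refine this.congr fun n => ?_
  rw [hmain n]
  ring
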